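/- Let m1, m2 be positive integers with m2 even and γ = (γ1,γ2) ∈ ℤ². Define χ_γ(i) = cos(γ1 i1 π/m1) e^{i γ2 i2 π/m2} if γ2 is even, and χ_γ(i) = i·sin(γ1 i1 π/m1) e^{i γ2 i2 π/m2} if γ2 is odd. If (1/(m1m2)) Σ_{i ∈ I(m)} χ_γ(i) ≠ 0, then there exist integers h1, h2 with γ1 = h1 m1, γ2 = h2 m2 and h1 + h2 even; and conversely, if such h1, h2 exist then (1/(m1m2)) Σ_{i ∈ I(m)} χ_γ(i) = 1. -/

import Mathlib

open Real Complex

/-- The index set I(m) as a finset. -/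
def indexSet (m1 m2 : ℕ) : Finset (ℕ × ℕ) :=
  (Finset.range (m1 + 1) ×ˢ Finset.range (2 * m2)).filter
    (fun i => ((i.1 = 0 ∨ i.1 = m1) → i.2 < m2) ∧ Even (i.1 + i.2))

/-- The discretized parity-modified Fourier basis functions χ_γ. -/
noncomputable def chi (m1 m2 : ℕ) (γ : ℤ × ℤ) (i : ℕ × ℕ) : ℂ :=
  if Even γ.2 then
    (Real.cos ((γ.1 : ℝ) * i.1 * π / m1) : ℂ) *
      Complex.exp (Complex.I * γ.2 * i.2 * (π : ℂ) / m2)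
  else
    Complex.I * (Real.sin ((γ.1 : ℝ) * i.1 * π / m1) : ℂ) *
      Complex.exp (Complex.I * γ.2 * i.2 * (π : ℂ) / m2)

namespace Stmt10Aux

/-- The full even sublattice of [0,2m1) × [0,2m2). -/
def fullSet (m1 m2 : ℕ) : Finset (ℕ × ℕ) :=
  (Finset.range (2 * m1) ×ˢ Finset.range (2 * m2)).filter (fun i => Even (i.1 + i.2))

/-- The involution swapping indexSet and its complement in fullSet. -/
def flipMap (m1 m2 : ℕ) (i : ℕ × ℕ) : ℕ × ℕ :=
  (if i.1 = 0 then 0 else 2 * m1 - i.1, if i.2 < m2 then i.2 + m2 else i.2 - m2)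

lemma pow_mod_of_pow_eq_one {z : ℂ} {n : ℕ} (hz : z ^ n = 1) (a : ℕ) :
    z ^ (a % n) = z ^ a := by
  conv_rhs => rw [← Nat.div_add_mod a n]
  rw [pow_add, pow_mul, hz, one_pow, one_mul]

lemma geom_vanish {z : ℂ} {n : ℕ} (hz : z ^ n = 1) :
    ∑ j ∈ Finset.range n, z ^ j = if z = 1 then (n : ℂ) else 0 := by
  split_ifs with h
  · simp [h]
  · rw [geom_sum_eq h, hz]; simp

lemma exp_eq_one_iff' (m : ℕ) (hm : 0 < m) (g : ℤ) :
    Complex.exp (Complex.I * π * g / m) = 1 ↔ ∃ n : ℤ, g = 2 * n * m := by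
  rw [Complex.exp_eq_one_iff]
  have hm' : (m : ℂ) ≠ 0 := Nat.cast_ne_zero.mpr hm.ne'
  have hπ : (π : ℂ) ≠ 0 := Complex.ofReal_ne_zero.mpr Real.pi_ne_zero
  have hI := Complex.I_ne_zero
  constructor
  · rintro ⟨n, hn⟩
    refine ⟨n, ?_⟩
    field_simp at hn
    have h2 : (g : ℂ) = 2 * n * m := by
      apply mul_left_cancel₀ (mul_ne_zero hI hπ)
      linear_combination (Complex.I * π) * hn
    exact_mod_cast h2
  · rintro ⟨n, hn⟩
    refine ⟨n, ?_⟩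
    rw [hn]; push_cast; field_simp

lemma exp_eq_neg_one_iff' (m : ℕ) (hm : 0 < m) (g : ℤ) :
    Complex.exp (Complex.I * π * g / m) = -1 ↔ ∃ n : ℤ, g = (2 * n + 1) * m := by
  have hm' : (m : ℂ) ≠ 0 := Nat.cast_ne_zero.mpr hm.ne'
  have key : Complex.I * π * ((g : ℂ) + m) / m = Complex.I * π * g / m + π * Complex.I := by
    field_simp
  constructor
  · intro h
    have h2 : Complex.exp (Complex.I * π * ((g + m : ℤ) : ℂ) / m) = 1 := by
      push_cast
      rw [key, Complex.exp_add, h, Complex.exp_pi_mul_I]; ring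
    obtain ⟨n, hn⟩ := (exp_eq_one_iff' m hm (g + m)).mp h2
    exact ⟨n - 1, by linear_combination hn⟩
  · rintro ⟨n, rfl⟩
    have h2 : Complex.exp (Complex.I * π * (((2 * n + 1) * m + m : ℤ) : ℂ) / m) = 1 :=
      (exp_eq_one_iff' m hm _).mpr ⟨n + 1, by ring⟩
    have key2 : Complex.I * π * (((2 * n + 1) * m + m : ℤ) : ℂ) / m
        = Complex.I * π * (((2 * n + 1) * m : ℤ) : ℂ) / m + π * Complex.I := by
      push_cast; field_simp
    rw [key2, Complex.exp_add, Complex.exp_pi_mul_I] at h2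
    calc Complex.exp (Complex.I * ↑π * (((2 * n + 1) * m : ℤ) : ℂ) / ↑m)
        = Complex.exp (Complex.I * ↑π * (((2 * n + 1) * m : ℤ) : ℂ) / ↑m) * -1 * -1 := by ring
      _ = -1 := by rw [h2]; ring

lemma cond_iff (m1 m2 : ℕ) (γ : ℤ × ℤ) :
    (∃ h1 h2 : ℤ, γ.1 = h1 * m1 ∧ γ.2 = h2 * m2 ∧ Even (h1 + h2)) ↔
    (((∃ n : ℤ, γ.1 = 2 * n * m1) ∧ (∃ n : ℤ, γ.2 = 2 * n * m2)) ∨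
     ((∃ n : ℤ, γ.1 = (2 * n + 1) * m1) ∧ (∃ n : ℤ, γ.2 = (2 * n + 1) * m2))) := by
  constructor
  · rintro ⟨h1, h2, e1, e2, hev⟩
    rcases Int.even_or_odd h1 with he | ho
    · have he2 : Even h2 := (Int.even_add.mp hev).mp he
      obtain ⟨a, ha⟩ := he
      obtain ⟨b, hb⟩ := he2
      exact Or.inl ⟨⟨a, by rw [e1, ha]; ring⟩, ⟨b, by rw [e2, hb]; ring⟩⟩
    · have ho2 : Odd h2 := by
        rcases Int.even_or_odd h2 with he2 | ho2
        · exact absurd ((Int.even_add.mp hev).mpr he2) (Int.not_even_iff_odd.mpr ho)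
        · exact ho2
      obtain ⟨a, ha⟩ := ho
      obtain ⟨b, hb⟩ := ho2
      exact Or.inr ⟨⟨a, by rw [e1, ha]⟩, ⟨b, by rw [e2, hb]⟩⟩
  · rintro (⟨⟨a, ha⟩, ⟨b, hb⟩⟩ | ⟨⟨a, ha⟩, ⟨b, hb⟩⟩)
    · exact ⟨2 * a, 2 * b, by rw [ha], by rw [hb], ⟨a + b, by ring⟩⟩
    · exact ⟨2 * a + 1, 2 * b + 1, by rw [ha], by rw [hb], ⟨a + b + 1, by ring⟩⟩

lemma mem_indexSet {m1 m2 : ℕ} {i : ℕ × ℕ} :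
    i ∈ indexSet m1 m2 ↔
      i.1 ≤ m1 ∧ i.2 < 2 * m2 ∧ ((i.1 = 0 ∨ i.1 = m1) → i.2 < m2) ∧ (i.1 + i.2) % 2 = 0 := by
  simp [indexSet, Finset.mem_filter, Finset.mem_product, Nat.lt_succ_iff, Nat.even_iff,
    and_assoc]

lemma mem_fullSet {m1 m2 : ℕ} {i : ℕ × ℕ} :
    i ∈ fullSet m1 m2 ↔ i.1 < 2 * m1 ∧ i.2 < 2 * m2 ∧ (i.1 + i.2) % 2 = 0 := by
  simp [fullSet, Finset.mem_filter, Finset.mem_product, Nat.even_iff, and_assoc]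

lemma sum_split (m1 m2 : ℕ) (hm1 : 0 < m1) (hm2 : 0 < m2) (heven : Even m2)
    (F : ℕ × ℕ → ℂ) :
    ∑ i ∈ fullSet m1 m2, F i =
      ∑ i ∈ indexSet m1 m2, F i + ∑ i ∈ indexSet m1 m2, F (flipMap m1 m2 i) := by
  have hm2e : m2 % 2 = 0 := Nat.even_iff.mp heven
  have hsub : indexSet m1 m2 ⊆ fullSet m1 m2 := by
    intro i hi
    rw [mem_indexSet] at hi; rw [mem_fullSet]
    omega
  have hinv : ∀ a : ℕ × ℕ, a.1 < 2 * m1 → a.2 < 2 * m2 →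
      flipMap m1 m2 (flipMap m1 m2 a) = a := by
    rintro ⟨a1, a2⟩ h1 h2
    rw [Prod.ext_iff]
    constructor <;> simp only [flipMap] <;> split_ifs <;> omega
  rw [← Finset.sum_sdiff hsub, add_comm]
  congr 1
  refine Finset.sum_nbij' (flipMap m1 m2) (flipMap m1 m2) ?_ ?_ ?_ ?_ ?_
  · rintro ⟨a1, a2⟩ ha
    rw [Finset.mem_sdiff, mem_fullSet, mem_indexSet] at ha
    rw [mem_indexSet]
    simp only [flipMap]
    split_ifs <;> simp_all <;> omega
  · rintro ⟨a1, a2⟩ ha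
    rw [mem_indexSet] at ha
    rw [Finset.mem_sdiff, mem_fullSet, mem_indexSet]
    simp only [flipMap]
    split_ifs <;> simp_all <;> omega
  · rintro ⟨a1, a2⟩ ha
    rw [Finset.mem_sdiff, mem_fullSet] at ha
    exact hinv _ ha.1.1 ha.1.2.1
  · rintro ⟨a1, a2⟩ ha
    rw [mem_indexSet] at ha
    exact hinv _ (by omega) (by omega)
  · rintro ⟨a1, a2⟩ ha
    rw [Finset.mem_sdiff, mem_fullSet] at ha
    rw [hinv _ ha.1.1 ha.1.2.1]

lemma sum_full (m1 m2 : ℕ) (z1 z2 : ℂ) :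
    ∑ i ∈ fullSet m1 m2, z1 ^ i.1 * z2 ^ i.2 =
      ((∑ j ∈ Finset.range (2 * m1), z1 ^ j) * (∑ j ∈ Finset.range (2 * m2), z2 ^ j)
       + (∑ j ∈ Finset.range (2 * m1), (-z1) ^ j) *
         (∑ j ∈ Finset.range (2 * m2), (-z2) ^ j)) / 2 := by
  rw [fullSet, Finset.sum_filter]
  have key : ∀ i : ℕ × ℕ, (if Even (i.1 + i.2) then z1 ^ i.1 * z2 ^ i.2 else 0)
      = (z1 ^ i.1 * z2 ^ i.2 + (-z1) ^ i.1 * (-z2) ^ i.2) / 2 := by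
    rintro ⟨i1, i2⟩
    simp only
    have hneg : (-z1) ^ i1 * (-z2) ^ i2 = (-1) ^ (i1 + i2) * (z1 ^ i1 * z2 ^ i2) := by
      rw [neg_pow, neg_pow, pow_add]; ring
    by_cases h : Even (i1 + i2)
    · rw [if_pos h, hneg, h.neg_one_pow]; ring
    · rw [if_neg h, hneg, (Nat.not_even_iff_odd.mp h).neg_one_pow]; ring
  rw [Finset.sum_congr rfl (fun i _ => key i)]
  rw [eq_div_iff (two_ne_zero' ℂ), Finset.sum_mul_sum, Finset.sum_mul_sum,
    ← Finset.sum_product', ← Finset.sum_product', ← Finset.sum_add_distrib, Finset.sum_mul]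
  exact Finset.sum_congr rfl (fun i _ => by ring)

lemma exp_pow_two_mul (m : ℕ) (hm : 0 < m) (g : ℤ) :
    Complex.exp (Complex.I * π * g / m) ^ (2 * m) = 1 := by
  have hm' : (m : ℂ) ≠ 0 := Nat.cast_ne_zero.mpr hm.ne'
  rw [← Complex.exp_nat_mul]
  rw [show ((2 * m : ℕ) : ℂ) * (Complex.I * π * g / m) = (g : ℂ) * (2 * π * Complex.I) by
    push_cast; field_simp]
  exact Complex.exp_int_mul_two_pi_mul_I g

lemma chi_formula (m1 m2 : ℕ) (hm1 : 0 < m1) (hm2 : 0 < m2) (γ : ℤ × ℤ)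
    (i1 i2 : ℕ) (h : i1 ≤ 2 * m1) :
    chi m1 m2 γ (i1, i2) =
      (Complex.exp (Complex.I * π * γ.1 / m1) ^ i1 *
         Complex.exp (Complex.I * π * γ.2 / m2) ^ i2
       + Complex.exp (Complex.I * π * γ.1 / m1) ^ (2 * m1 - i1) *
         Complex.exp (Complex.I * π * γ.2 / m2) ^ (i2 + m2)) / 2 := by
  have hm1' : (m1 : ℂ) ≠ 0 := Nat.cast_ne_zero.mpr hm1.ne'
  have hm2' : (m2 : ℂ) ≠ 0 := Nat.cast_ne_zero.mpr hm2.ne'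
  set z1 := Complex.exp (Complex.I * π * γ.1 / m1) with hz1def
  set z2 := Complex.exp (Complex.I * π * γ.2 / m2) with hz2def
  have hz1 : z1 ^ (2 * m1) = 1 := exp_pow_two_mul m1 hm1 γ.1
  have hz2 : z2 ^ (2 * m2) = 1 := exp_pow_two_mul m2 hm2 γ.2
  have e1 : Complex.exp ((((γ.1 : ℝ) * i1 * π / m1 : ℝ) : ℂ) * Complex.I) = z1 ^ i1 := by
    rw [hz1def, ← Complex.exp_nat_mul]
    congr 1
    push_cast
    field_simp
  have e2 : Complex.exp (-((((γ.1 : ℝ) * i1 * π / m1 : ℝ) : ℂ) * Complex.I))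
      = z1 ^ (2 * m1 - i1) := by
    have hmul : z1 ^ (2 * m1 - i1) * z1 ^ i1 = 1 := by
      rw [← pow_add, Nat.sub_add_cancel h, hz1]
    rw [Complex.exp_neg, e1]
    exact (eq_inv_of_mul_eq_one_left hmul).symm
  have e3 : Complex.exp (Complex.I * γ.2 * i2 * (π : ℂ) / m2) = z2 ^ i2 := by
    rw [hz2def, ← Complex.exp_nat_mul]
    congr 1
    field_simp
  have hz2m : z2 ^ m2 = (-1 : ℂ) ^ γ.2 := by
    rw [hz2def, ← Complex.exp_nat_mul]
    rw [show ((m2 : ℕ) : ℂ) * (Complex.I * π * γ.2 / m2) = (γ.2 : ℂ) * ((π : ℂ) * Complex.I) by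
      field_simp]
    rw [Complex.exp_int_mul, Complex.exp_pi_mul_I]
  have e4 : z2 ^ (i2 + m2) = (-1 : ℂ) ^ γ.2 * z2 ^ i2 := by rw [pow_add, hz2m]; ring
  rw [chi]
  by_cases hev : Even γ.2
  · rw [if_pos hev]
    simp only
    rw [e3]
    have hcos : ((Real.cos ((γ.1 : ℝ) * i1 * π / m1) : ℝ) : ℂ)
        = (z1 ^ i1 + z1 ^ (2 * m1 - i1)) / 2 := by
      rw [Complex.ofReal_cos]
      have h2c := Complex.two_cos ((((γ.1 : ℝ) * i1 * π / m1 : ℝ) : ℂ))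
      rw [neg_mul] at h2c
      rw [e1, e2] at h2c
      linear_combination h2c / 2
    rw [hcos, e4, hev.neg_one_zpow]
    ring
  · rw [if_neg hev]
    simp only
    rw [e3]
    have hodd : Odd γ.2 := Int.not_even_iff_odd.mp hev
    have hsin : Complex.I * ((Real.sin ((γ.1 : ℝ) * i1 * π / m1) : ℝ) : ℂ)
        = (z1 ^ i1 - z1 ^ (2 * m1 - i1)) / 2 := by
      rw [Complex.ofReal_sin]
      have h2s := Complex.two_sin ((((γ.1 : ℝ) * i1 * π / m1 : ℝ) : ℂ))
      rw [neg_mul] at h2s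
      rw [e1, e2] at h2s
      have hI2 := Complex.I_mul_I
      linear_combination (Complex.I / 2) * h2s + ((z1 ^ (2 * m1 - i1) - z1 ^ i1) / 2) * hI2
    have e4' : z2 ^ (i2 + m2) = -z2 ^ i2 := by rw [e4, hodd.neg_one_zpow]; ring
    linear_combination (z2 ^ i2) * hsin + (-(z1 ^ (2 * m1 - i1)) / 2) * e4'

lemma sum_eval (m1 m2 : ℕ) (hm1 : 0 < m1) (hm2 : 0 < m2) (heven : Even m2)
    (γ : ℤ × ℤ) :
    ∑ i ∈ indexSet m1 m2, chi m1 m2 γ i =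
      ((if Complex.exp (Complex.I * π * γ.1 / m1) = 1 then ((2 * m1 : ℕ) : ℂ) else 0) *
         (if Complex.exp (Complex.I * π * γ.2 / m2) = 1 then ((2 * m2 : ℕ) : ℂ) else 0)
       + (if Complex.exp (Complex.I * π * γ.1 / m1) = -1 then ((2 * m1 : ℕ) : ℂ) else 0) *
         (if Complex.exp (Complex.I * π * γ.2 / m2) = -1 then ((2 * m2 : ℕ) : ℂ) else 0)) / 4 := by
  set z1 := Complex.exp (Complex.I * π * γ.1 / m1) with hz1def
  set z2 := Complex.exp (Complex.I * π * γ.2 / m2) with hz2def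
  have hz1 : z1 ^ (2 * m1) = 1 := exp_pow_two_mul m1 hm1 γ.1
  have hz2 : z2 ^ (2 * m2) = 1 := exp_pow_two_mul m2 hm2 γ.2
  have hz1n : (-z1) ^ (2 * m1) = 1 := by
    rw [neg_pow, (even_two_mul m1).neg_one_pow, one_mul, hz1]
  have hz2n : (-z2) ^ (2 * m2) = 1 := by
    rw [neg_pow, (even_two_mul m2).neg_one_pow, one_mul, hz2]
  have hflip : ∀ i ∈ indexSet m1 m2,
      z1 ^ (flipMap m1 m2 i).1 * z2 ^ (flipMap m1 m2 i).2
        = z1 ^ (2 * m1 - i.1) * z2 ^ (i.2 + m2) := by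
    rintro ⟨i1, i2⟩ hi
    rw [mem_indexSet] at hi
    simp only [flipMap]
    have c1 : z1 ^ (if i1 = 0 then 0 else 2 * m1 - i1) = z1 ^ (2 * m1 - i1) := by
      split_ifs with h0
      · subst h0; rw [Nat.sub_zero, hz1, pow_zero]
      · rfl
    have c2 : z2 ^ (if i2 < m2 then i2 + m2 else i2 - m2) = z2 ^ (i2 + m2) := by
      split_ifs with h0
      · rfl
      · have : i2 + m2 = (i2 - m2) + 2 * m2 := by omega
        rw [this, pow_add, hz2, mul_one]
    rw [c1, c2]
  calc ∑ i ∈ indexSet m1 m2, chi m1 m2 γ i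
      = ∑ i ∈ indexSet m1 m2,
          (z1 ^ i.1 * z2 ^ i.2 + z1 ^ (2 * m1 - i.1) * z2 ^ (i.2 + m2)) / 2 := by
        refine Finset.sum_congr rfl (fun i hi => ?_)
        obtain ⟨i1, i2⟩ := i
        exact chi_formula m1 m2 hm1 hm2 γ i1 i2
          (by rw [mem_indexSet] at hi; simp at hi; omega)
    _ = (∑ i ∈ fullSet m1 m2, z1 ^ i.1 * z2 ^ i.2) / 2 := by
        rw [sum_split m1 m2 hm1 hm2 heven (fun i => z1 ^ i.1 * z2 ^ i.2)]
        rw [← Finset.sum_add_distrib, ← Finset.sum_div]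
        congr 1
        refine Finset.sum_congr rfl (fun i hi => ?_)
        rw [hflip i hi]
    _ = ((if z1 = 1 then ((2 * m1 : ℕ) : ℂ) else 0) *
           (if z2 = 1 then ((2 * m2 : ℕ) : ℂ) else 0)
         + (if z1 = -1 then ((2 * m1 : ℕ) : ℂ) else 0) *
           (if z2 = -1 then ((2 * m2 : ℕ) : ℂ) else 0)) / 4 := by
        rw [sum_full, geom_vanish hz1, geom_vanish hz2, geom_vanish hz1n, geom_vanish hz2n]
        have hcw : ∀ w : ℂ, (-w = 1) ↔ (w = -1) :=
          fun w => ⟨fun h => by linear_combination -h, fun h => by rw [h]; ring⟩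
        simp only [hcw]
        ring

end Stmt10Aux

theorem stmt10 (m1 m2 : ℕ) (hm1 : 0 < m1) (hm2 : 0 < m2) (heven : Even m2)
    (γ : ℤ × ℤ) :
    ((1 / (m1 * m2 : ℂ)) * ∑ i ∈ indexSet m1 m2, chi m1 m2 γ i ≠ 0 →
      ∃ h1 h2 : ℤ, γ.1 = h1 * m1 ∧ γ.2 = h2 * m2 ∧ Even (h1 + h2)) ∧
    ((∃ h1 h2 : ℤ, γ.1 = h1 * m1 ∧ γ.2 = h2 * m2 ∧ Even (h1 + h2)) →
      (1 / (m1 * m2 : ℂ)) * ∑ i ∈ indexSet m1 m2, chi m1 m2 γ i = 1) := by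
  have hm1' : (m1 : ℂ) ≠ 0 := Nat.cast_ne_zero.mpr hm1.ne'
  have hm2' : (m2 : ℂ) ≠ 0 := Nat.cast_ne_zero.mpr hm2.ne'
  have hsum := Stmt10Aux.sum_eval m1 m2 hm1 hm2 heven γ
  constructor
  · intro hne
    rw [Stmt10Aux.cond_iff m1 m2 γ]
    by_contra hc
    rw [not_or] at hc
    obtain ⟨hc1, hc2⟩ := hc
    apply hne
    rw [hsum]
    have h1 : (if Complex.exp (Complex.I * π * γ.1 / m1) = 1 then ((2 * m1 : ℕ) : ℂ) else 0) *
        (if Complex.exp (Complex.I * π * γ.2 / m2) = 1 then ((2 * m2 : ℕ) : ℂ) else 0) = 0 := by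
      rcases not_and_or.mp hc1 with h | h
      · rw [if_neg (fun he => h ((Stmt10Aux.exp_eq_one_iff' m1 hm1 γ.1).mp he)), zero_mul]
      · rw [if_neg (fun he => h ((Stmt10Aux.exp_eq_one_iff' m2 hm2 γ.2).mp he)), mul_zero]
    have h2 : (if Complex.exp (Complex.I * π * γ.1 / m1) = -1 then ((2 * m1 : ℕ) : ℂ) else 0) *
        (if Complex.exp (Complex.I * π * γ.2 / m2) = -1 then ((2 * m2 : ℕ) : ℂ) else 0) = 0 := by
      rcases not_and_or.mp hc2 with h | h
      · rw [if_neg (fun he => h ((Stmt10Aux.exp_eq_neg_one_iff' m1 hm1 γ.1).mp he)), zero_mul]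
      · rw [if_neg (fun he => h ((Stmt10Aux.exp_eq_neg_one_iff' m2 hm2 γ.2).mp he)), mul_zero]
    rw [h1, h2]
    ring
  · intro hP
    rw [Stmt10Aux.cond_iff m1 m2 γ] at hP
    have key : ∑ i ∈ indexSet m1 m2, chi m1 m2 γ i = (m1 : ℂ) * m2 := by
      rcases hP with ⟨ha, hb⟩ | ⟨ha, hb⟩
      · have he1 : Complex.exp (Complex.I * π * γ.1 / m1) = 1 :=
          (Stmt10Aux.exp_eq_one_iff' m1 hm1 γ.1).mpr ha
        have he2 : Complex.exp (Complex.I * π * γ.2 / m2) = 1 :=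
          (Stmt10Aux.exp_eq_one_iff' m2 hm2 γ.2).mpr hb
        rw [hsum, if_pos he1, if_pos he2, if_neg (by rw [he1]; norm_num),
          if_neg (by rw [he2]; norm_num)]
        push_cast
        ring
      · have he1 : Complex.exp (Complex.I * π * γ.1 / m1) = -1 :=
          (Stmt10Aux.exp_eq_neg_one_iff' m1 hm1 γ.1).mpr ha
        have he2 : Complex.exp (Complex.I * π * γ.2 / m2) = -1 :=
          (Stmt10Aux.exp_eq_neg_one_iff' m2 hm2 γ.2).mpr hb
        rw [hsum, if_pos he1, if_pos he2, if_neg (by rw [he1]; norm_num),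
          if_neg (by rw [he2]; norm_num)]
        push_cast
        ring
    rw [key]
    field_simp
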